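/- Consider the two-factor secure sketch system with A uniform on (ZMod 2)^n, K uniform on (ZMod 2)^m, A and K independent, H an m × n binary matrix of full row rank, and S = HA ⊕ K. Let (C,J) be an arbitrary random attack pair with values in (ZMod 2)^n × (ZMod 2)^m. If (C,J) is independent of K (but may depend on A), or if (C,J) is independent of A (but may depend on K), then the decoding syndrome HC ⊕ J ⊕ S = H(A ⊕ C) ⊕ (K ⊕ J) is uniformly distributed on (ZMod 2)^m. Consequently an adversary knowing only A, or only K, gains no advantage: P_SA(A) = P_SA(K) = P_FA. -/

import Mathlib

/-- Probability of the event `P` under the uniform distribution on the finite type `Ω`. -/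
noncomputable def unifProb (Ω : Type*) [Fintype Ω] (P : Ω → Prop) : ℝ :=
  (Nat.card {ω : Ω // P ω} : ℝ) / (Fintype.card Ω : ℝ)

open Classical in
/-- Probability of the event `P` under the probability mass function `μ` on the finite
sample space `Ω`. -/
noncomputable def prMass {Ω : Type*} [Fintype Ω] (μ : Ω → ℝ) (P : Ω → Prop) : ℝ :=
  ∑ ω : Ω, if P ω then μ ω else 0

open Classical Matrix

lemma prMass_congr {Ω : Type*} [Fintype Ω] (μ : Ω → ℝ) {P Q : Ω → Prop}
    (h : ∀ ω, P ω ↔ Q ω) : prMass μ P = prMass μ Q := by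
  unfold prMass
  exact Finset.sum_congr rfl fun ω _ => by rw [if_congr (h ω) rfl rfl]

lemma prMass_partition {Ω α : Type*} [Fintype Ω] [Fintype α] (μ : Ω → ℝ)
    (f : Ω → α) (P : Ω → Prop) :
    prMass μ P = ∑ a : α, prMass μ (fun ω => P ω ∧ f ω = a) := by
  unfold prMass
  rw [Finset.sum_comm]
  refine Finset.sum_congr rfl fun ω _ => ?_
  by_cases h : P ω
  · simp only [h, true_and]
    rw [Finset.sum_ite_eq Finset.univ (f ω) (fun _ => μ ω)]
    simp [h]
  · simp [h]

lemma prMass_total {Ω : Type*} [Fintype Ω] (μ : Ω → ℝ) (hμ1 : ∑ ω : Ω, μ ω = 1) :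
    prMass μ (fun _ => True) = 1 := by
  unfold prMass; simpa using hμ1

-- uniformity of U + g(T) when U is "uniform given T"
lemma uniform_shift {Ω β : Type*} [Fintype Ω] [Fintype β] {m : ℕ} (μ : Ω → ℝ)
    (hμ1 : ∑ ω : Ω, μ ω = 1)
    (U : Ω → Fin m → ZMod 2) (T : Ω → β) (g : β → Fin m → ZMod 2)
    (h : ∀ v t, prMass μ (fun ω => U ω = v ∧ T ω = t)
        = 1 / 2 ^ m * prMass μ (fun ω => T ω = t)) :
    ∀ q, prMass μ (fun ω => U ω + g (T ω) = q) = 1 / 2 ^ m := by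
  intro q
  rw [prMass_partition μ T]
  have : ∀ t : β, prMass μ (fun ω => U ω + g (T ω) = q ∧ T ω = t)
      = 1 / 2 ^ m * prMass μ (fun ω => T ω = t) := by
    intro t
    rw [prMass_congr μ (Q := fun ω => U ω = q - g t ∧ T ω = t), h]
    intro ω
    constructor
    · rintro ⟨h1, h2⟩; subst h2; exact ⟨by rw [← h1]; abel, rfl⟩
    · rintro ⟨h1, h2⟩; subst h2; exact ⟨by rw [h1]; abel, rfl⟩
  rw [Finset.sum_congr rfl fun t _ => this t, ← Finset.mul_sum]
  have htot : ∑ t : β, prMass μ (fun ω => T ω = t) = 1 := by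
    rw [← prMass_total μ hμ1, prMass_partition μ T (fun _ => True)]
    exact Finset.sum_congr rfl fun t _ => prMass_congr μ fun ω => by tauto
  rw [htot, mul_one]

lemma dec_from_uniform {Ω : Type*} [Fintype Ω] {m : ℕ} (μ : Ω → ℝ)
    (S : Ω → Fin m → ZMod 2)
    (hS : ∀ q, prMass μ (fun ω => S ω = q) = 1 / 2 ^ m)
    (dec : (Fin m → ZMod 2) → Bool) :
    prMass μ (fun ω => dec (S ω) = true)
      = unifProb (Fin m → ZMod 2) (fun q => dec q = true) := by
  rw [prMass_partition μ S]
  have : ∀ q, prMass μ (fun ω => dec (S ω) = true ∧ S ω = q)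
      = if dec q = true then (1:ℝ) / 2 ^ m else 0 := by
    intro q
    by_cases h : dec q = true
    · rw [prMass_congr μ (Q := fun ω => S ω = q), hS, if_pos h]
      intro ω
      constructor
      · rintro ⟨_, h2⟩; exact h2
      · intro h2; exact ⟨by rw [h2]; exact h, h2⟩
    · rw [if_neg h]
      rw [prMass_congr μ (Q := fun _ => False)]
      · simp [prMass]
      · intro ω
        constructor
        · rintro ⟨h1, h2⟩; exact h (by rwa [h2] at h1)
        · intro h1; exact h1.elim
  rw [Finset.sum_congr rfl fun q _ => this q]
  rw [Finset.sum_ite, Finset.sum_const, Finset.sum_const, smul_zero, add_zero]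
  unfold unifProb
  rw [Nat.card_eq_fintype_card, Fintype.card_subtype]
  simp only [nsmul_eq_mul, Fintype.card_fun, Fintype.card_fin, ZMod.card]
  rw [mul_one_div, div_eq_div_iff (by positivity) (by positivity)]
  push_cast
  ring

lemma fiber_sum {n m : ℕ} (H : Matrix (Fin m) (Fin n) (ZMod 2))
    (hH : LinearIndependent (ZMod 2) (fun i => H i)) (v : Fin m → ZMod 2) :
    ∑ a : Fin n → ZMod 2, (if H.mulVec a = v then (1:ℝ) / 2 ^ n else 0)
      = 1 / 2 ^ m := by
  haveI : Fact (Nat.Prime 2) := ⟨Nat.prime_two⟩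
  -- surjectivity of mulVec
  have hinj : Function.Injective (Hᵀ.mulVec) :=
    Matrix.mulVec_injective_iff.mpr (by exact hH)
  have hrank : Matrix.rank H = m := by
    rw [← Matrix.rank_transpose]
    have : LinearMap.range (Hᵀ.mulVecLin) ≃ₗ[ZMod 2] (Fin m → ZMod 2) :=
      (LinearEquiv.ofInjective Hᵀ.mulVecLin (by exact hinj)).symm
    rw [Matrix.rank]
    rw [this.finrank_eq]
    simp
  have hsurj : Function.Surjective (H.mulVec) := by
    have htop : LinearMap.range (H.mulVecLin) = ⊤ := by
      apply Submodule.eq_top_of_finrank_eq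
      rw [show Module.finrank (ZMod 2) (LinearMap.range H.mulVecLin) = Matrix.rank H from rfl,
        hrank]
      simp
    intro v
    obtain ⟨a, ha⟩ := LinearMap.range_eq_top.mp htop v
    exact ⟨a, ha⟩
  -- fibers all have the same cardinality
  set c : (Fin m → ZMod 2) → ℕ :=
    fun w => (Finset.univ.filter (fun a : Fin n → ZMod 2 => H.mulVec a = w)).card with hc
  have hcc : ∀ w, c w = c 0 := by
    intro w
    obtain ⟨a₀, ha₀⟩ := hsurj w
    apply Finset.card_bij (fun a _ => a + a₀)
    · intro a ha
      simp only [Finset.mem_filter, Finset.mem_univ, true_and] at ha ⊢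
      rw [Matrix.mulVec_add, ha, ha₀]
      ext i
      rw [Pi.add_apply, Pi.zero_apply]
      exact (CharTwo.add_self_eq_zero _)
    · intro a ha b hb hab
      have := congrArg (fun x => x - a₀) hab
      simpa using this
    · intro b hb
      refine ⟨b + a₀, ?_, ?_⟩
      · simp only [Finset.mem_filter, Finset.mem_univ, true_and] at hb ⊢
        rw [Matrix.mulVec_add, hb, ha₀, zero_add]
      · funext i
        simp only [Pi.add_apply]
        rw [add_assoc, CharTwo.add_self_eq_zero, add_zero]
  have htotal : ∑ w : Fin m → ZMod 2, c w = 2 ^ n := by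
    rw [hc]
    rw [← Finset.card_eq_sum_card_fiberwise (fun a _ => Finset.mem_univ (H.mulVec a))]
    simp [ZMod.card]
  have hkey : 2 ^ m * c 0 = 2 ^ n := by
    rw [← htotal, Finset.sum_congr rfl fun w _ => hcc w, Finset.sum_const,
      Finset.card_univ, smul_eq_mul]
    simp [ZMod.card]
  have hsum : ∑ a : Fin n → ZMod 2, (if H.mulVec a = v then (1:ℝ) / 2 ^ n else 0)
      = (c v : ℝ) / 2 ^ n := by
    rw [Finset.sum_ite, Finset.sum_const, Finset.sum_const, smul_zero, add_zero,
      nsmul_eq_mul, mul_one_div, hc]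
  rw [hsum, hcc v, div_eq_div_iff (by positivity) (by positivity), one_mul, mul_comm]
  exact_mod_cast hkey


/-- In the two-factor secure sketch system (`A` uniform on `(ZMod 2)^n`,
`K` uniform on `(ZMod 2)^m`, `A ⊥ K`, `H` full row rank, `S = HA ⊕ K`), let `(C,J)` be an
arbitrary random attack pair.  The decoding syndrome satisfies
`HC ⊕ J ⊕ S = H(A ⊕ C) ⊕ (K ⊕ J)`.  If the attack is generated knowing only `A`
(i.e. `K` is independent of `(A,C,J)`), or knowing only `K` (i.e. `A` is independent of
`(K,C,J)`), then the decoding syndrome is uniform on `(ZMod 2)^m`; consequently, since the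
accept decision is a deterministic function of the syndrome, the acceptance probability
equals that obtained under a uniformly distributed syndrome, i.e.
`P_SA(A) = P_SA(K) = P_FA`. -/
theorem stmt_13 {Ω : Type*} [Fintype Ω] (n m : ℕ)
    (μ : Ω → ℝ) (hμ0 : ∀ ω, 0 ≤ μ ω) (hμ1 : ∑ ω : Ω, μ ω = 1)
    (A C : Ω → Fin n → ZMod 2) (K J : Ω → Fin m → ZMod 2)
    (hA : ∀ a, prMass μ (fun ω => A ω = a) = 1 / 2 ^ n)
    (hK : ∀ x, prMass μ (fun ω => K ω = x) = 1 / 2 ^ m)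
    (hAK : ∀ a x, prMass μ (fun ω => A ω = a ∧ K ω = x)
      = prMass μ (fun ω => A ω = a) * prMass μ (fun ω => K ω = x))
    (H : Matrix (Fin m) (Fin n) (ZMod 2))
    (hH : LinearIndependent (ZMod 2) (fun i => H i)) :
    (∀ ω, H.mulVec (C ω) + J ω + (H.mulVec (A ω) + K ω)
        = H.mulVec (A ω + C ω) + (K ω + J ω))
    ∧ ((∀ x a c j, prMass μ (fun ω => K ω = x ∧ A ω = a ∧ C ω = c ∧ J ω = j)
          = prMass μ (fun ω => K ω = x)
            * prMass μ (fun ω => A ω = a ∧ C ω = c ∧ J ω = j)) →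
        (∀ q, prMass μ
            (fun ω => H.mulVec (C ω) + J ω + (H.mulVec (A ω) + K ω) = q) = 1 / 2 ^ m)
        ∧ ∀ dec : (Fin m → ZMod 2) → Bool,
            prMass μ (fun ω =>
                dec (H.mulVec (C ω) + J ω + (H.mulVec (A ω) + K ω)) = true)
              = unifProb (Fin m → ZMod 2) (fun q => dec q = true))
    ∧ ((∀ a x c j, prMass μ (fun ω => A ω = a ∧ K ω = x ∧ C ω = c ∧ J ω = j)
          = prMass μ (fun ω => A ω = a)
            * prMass μ (fun ω => K ω = x ∧ C ω = c ∧ J ω = j)) →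
        (∀ q, prMass μ
            (fun ω => H.mulVec (C ω) + J ω + (H.mulVec (A ω) + K ω) = q) = 1 / 2 ^ m)
        ∧ ∀ dec : (Fin m → ZMod 2) → Bool,
            prMass μ (fun ω =>
                dec (H.mulVec (C ω) + J ω + (H.mulVec (A ω) + K ω)) = true)
              = unifProb (Fin m → ZMod 2) (fun q => dec q = true)) := by
  refine ⟨fun ω => by rw [Matrix.mulVec_add]; abel, ?_, ?_⟩
  · -- attacker knows only A : K independent of (A, C, J)
    intro h1
    have huni : ∀ q, prMass μ
        (fun ω => H.mulVec (C ω) + J ω + (H.mulVec (A ω) + K ω) = q) = 1 / 2 ^ m := by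
      intro q
      have := uniform_shift μ hμ1 K (fun ω => (A ω, C ω, J ω))
        (fun t => H.mulVec t.2.1 + t.2.2 + H.mulVec t.1)
        (by
          rintro v ⟨a, c, j⟩
          rw [prMass_congr μ (Q := fun ω => K ω = v ∧ A ω = a ∧ C ω = c ∧ J ω = j)
              (fun ω => by simp [Prod.ext_iff, and_assoc]),
            h1, hK,
            prMass_congr μ (P := fun ω => (A ω, C ω, J ω) = (a, c, j))
              (Q := fun ω => A ω = a ∧ C ω = c ∧ J ω = j)
              (fun ω => by simp [Prod.ext_iff])]) q
      rw [← this]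
      exact prMass_congr μ fun ω => by
        constructor
        · intro h; rw [← h]; abel
        · intro h; rw [← h]; abel
    exact ⟨huni, fun dec => dec_from_uniform μ _ huni dec⟩
  · -- attacker knows only K : A independent of (K, C, J)
    intro h2
    have huni : ∀ q, prMass μ
        (fun ω => H.mulVec (C ω) + J ω + (H.mulVec (A ω) + K ω) = q) = 1 / 2 ^ m := by
      intro q
      have := uniform_shift μ hμ1 (fun ω => H.mulVec (A ω)) (fun ω => (K ω, C ω, J ω))
        (fun t => H.mulVec t.2.1 + t.2.2 + t.1)
        (by
          rintro v ⟨x, c, j⟩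
          set s := prMass μ (fun ω => K ω = x ∧ C ω = c ∧ J ω = j) with hs
          have hterm : ∀ a : Fin n → ZMod 2,
              prMass μ (fun ω => (H.mulVec (A ω) = v ∧ (K ω, C ω, J ω) = (x, c, j))
                ∧ A ω = a)
              = (if H.mulVec a = v then (1:ℝ) / 2 ^ n else 0) * s := by
            intro a
            by_cases hav : H.mulVec a = v
            · rw [if_pos hav,
                prMass_congr μ (Q := fun ω => A ω = a ∧ K ω = x ∧ C ω = c ∧ J ω = j)
                  (fun ω => by
                    constructor
                    · rintro ⟨⟨_, h3⟩, h4⟩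
                      simp only [Prod.ext_iff] at h3
                      exact ⟨h4, h3.1, h3.2.1, h3.2.2⟩
                    · rintro ⟨h4, h5, h6, h7⟩
                      refine ⟨⟨by rw [h4]; exact hav, ?_⟩, h4⟩
                      simp [Prod.ext_iff, h5, h6, h7]),
                h2, hA]
            · rw [if_neg hav, zero_mul,
                prMass_congr μ (Q := fun _ => False)
                  (fun ω => by
                    constructor
                    · rintro ⟨⟨h3, _⟩, h4⟩
                      exact hav (by rw [← h4]; exact h3)
                    · exact fun h => h.elim)]
              simp [prMass]
          rw [prMass_partition μ A (fun ω =>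
              H.mulVec (A ω) = v ∧ (K ω, C ω, J ω) = (x, c, j)),
            Finset.sum_congr rfl (fun a _ => hterm a), ← Finset.sum_mul,
            fiber_sum H hH v,
            prMass_congr μ (P := fun ω => (K ω, C ω, J ω) = (x, c, j))
              (Q := fun ω => K ω = x ∧ C ω = c ∧ J ω = j)
              (fun ω => by simp [Prod.ext_iff])]) q
      rw [← this]
      exact prMass_congr μ fun ω => by
        constructor
        · intro h; rw [← h]; abel
        · intro h; rw [← h]; abel
    exact ⟨huni, fun dec => dec_from_uniform μ _ huni dec⟩
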